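/- Let U₁ : ℝ → ℝ be real-analytic and 2π-periodic with U₁(0) = 0, U₁′(0) = 0, U₁″(0) = −1, and U₁(x) < 0 for all x ∈ (0, 2π). Then there exists a real-analytic 2π-periodic function V : ℝ → ℝ with V(x) > 0 for all x ∈ ℝ, V(0) = 1, and U₁(x) = (cos x − 1) V(x) for all x ∈ ℝ. -/

import Mathlib

noncomputable section

open Filter Topology

/-- Complex cosine is entire. -/
lemma analyticAt_complex_cos (z : ℂ) : AnalyticAt ℂ Complex.cos z := by
  have h : Complex.cos = fun z : ℂ =>
      (Complex.exp (z * Complex.I) + Complex.exp (-z * Complex.I)) / 2 := by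
    funext w
    rw [Complex.cos]
  rw [h]
  exact (((analyticAt_id.mul analyticAt_const).cexp).add
    ((analyticAt_id.neg.mul analyticAt_const).cexp)).div analyticAt_const two_ne_zero

/-- Real cosine is real-analytic. -/
lemma analyticAt_real_cos (x : ℝ) : AnalyticAt ℝ Real.cos x := by
  have h1 : AnalyticAt ℝ Complex.cos ((Complex.ofRealCLM : ℝ →L[ℝ] ℂ) x) :=
    (analyticAt_complex_cos _).restrictScalars
  have h2 : AnalyticAt ℝ
      (fun y : ℝ => Complex.reCLM (Complex.cos (Complex.ofRealCLM y))) x :=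
    (Complex.reCLM.analyticAt _).comp (h1.comp (Complex.ofRealCLM.analyticAt x))
  refine h2.congr (Filter.Eventually.of_forall fun y => ?_)
  simp [Complex.cos_ofReal_re]

/-- Second derivative at 0 of `x ↦ x^2 * h x` for analytic `h`. -/
lemma deriv2_sq_mul (h : ℝ → ℝ) (hh : AnalyticAt ℝ h 0) :
    deriv (deriv (fun x : ℝ => x ^ 2 * h x)) 0 = 2 * h 0 := by
  have hdh : AnalyticAt ℝ (deriv h) 0 := by
    obtain ⟨s, hs_mem, hs⟩ := hh.eventually_analyticAt.exists_mem
    exact (AnalyticOnNhd.deriv (fun y hy => hs y hy)) 0 (mem_of_mem_nhds hs_mem)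
  have hev : deriv (fun x : ℝ => x ^ 2 * h x) =ᶠ[𝓝 0]
      fun y => 2 * y * h y + y ^ 2 * deriv h y := by
    filter_upwards [hh.eventually_analyticAt] with y hy
    rw [deriv_fun_mul (differentiableAt_pow 2) hy.differentiableAt]
    simp [deriv_pow_field]
  rw [hev.deriv_eq]
  have h1 : HasDerivAt (fun y : ℝ => 2 * y * h y) (2 * h 0) 0 := by
    have ha : HasDerivAt (fun y : ℝ => 2 * y) 2 0 := by
      simpa using (hasDerivAt_id (0:ℝ)).const_mul 2
    simpa using ha.fun_mul hh.differentiableAt.hasDerivAt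
  have h2 : HasDerivAt (fun y : ℝ => y ^ 2 * deriv h y) 0 0 := by
    have hp : HasDerivAt (fun y : ℝ => y ^ 2) 0 0 := by
      simpa using hasDerivAt_pow 2 (0:ℝ)
    simpa using hp.fun_mul hdh.differentiableAt.hasDerivAt
  have := (h1.fun_add h2).deriv
  simpa using this

/-- Factorization lemma: an analytic function vanishing to order exactly 2 at 0 with
second derivative `-1` factors as `x^2 * h x` with `h 0 = -(1/2)`. -/
lemma factor_sq (f : ℝ → ℝ) (hf : AnalyticAt ℝ f 0) (h0 : f 0 = 0) (h1 : deriv f 0 = 0)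
    (h2 : deriv (deriv f) 0 = -1) :
    ∃ h : ℝ → ℝ, AnalyticAt ℝ h 0 ∧ h 0 = -(1/2) ∧ ∀ᶠ x in 𝓝 0, f x = x ^ 2 * h x := by
  have hne : ¬ ∀ᶠ x in 𝓝 (0:ℝ), f x = 0 := by
    intro hev
    have hEq : f =ᶠ[𝓝 (0:ℝ)] fun _ => (0:ℝ) := hev
    have : deriv (deriv f) 0 = deriv (deriv (fun _ : ℝ => (0:ℝ))) 0 :=
      (hEq.deriv.deriv).eq_of_nhds
    simp [this] at h2
  obtain ⟨n, g, hg, hg0, hev⟩ := hf.exists_eventuallyEq_pow_smul_nonzero_iff.mpr hne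
  simp only [sub_zero, smul_eq_mul] at hev
  have hevEq : f =ᶠ[𝓝 (0:ℝ)] fun x => x ^ n * g x := hev
  match n with
  | 0 =>
    exfalso
    have := hevEq.eq_of_nhds
    simp [h0] at this
    exact hg0 this.symm
  | 1 =>
    exfalso
    have hd : HasDerivAt (fun x : ℝ => x ^ 1 * g x) (g 0) 0 := by
      have := ((hasDerivAt_pow 1 (0:ℝ)).fun_mul hg.differentiableAt.hasDerivAt)
      simpa using this
    have : deriv f 0 = g 0 := by rw [hevEq.deriv_eq, hd.deriv]
    rw [h1] at this
    exact hg0 this.symm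
  | 2 =>
    refine ⟨g, hg, ?_, hev⟩
    have : deriv (deriv f) 0 = 2 * g 0 := by
      have := hevEq.deriv.deriv.eq_of_nhds
      rw [this, deriv2_sq_mul g hg]
    rw [h2] at this
    linarith
  | (m+3) =>
    exfalso
    have hg' : AnalyticAt ℝ (fun x : ℝ => x ^ (m+1) * g x) 0 :=
      ((analyticAt_id.pow (m+1)).mul hg)
    have hevEq2 : f =ᶠ[𝓝 (0:ℝ)] fun x => x ^ 2 * (x ^ (m+1) * g x) := by
      filter_upwards [hevEq] with x hx
      rw [hx]; ring
    have : deriv (deriv f) 0 = 2 * ((0:ℝ) ^ (m+1) * g 0) := by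
      have := hevEq2.deriv.deriv.eq_of_nhds
      rw [this, deriv2_sq_mul _ hg']
    simp [h2] at this

theorem potential_factorization
    (U₁ : ℝ → ℝ) (hA : ∀ x, AnalyticAt ℝ U₁ x)
    (hper : Function.Periodic U₁ (2 * Real.pi))
    (h0 : U₁ 0 = 0) (h1 : deriv U₁ 0 = 0) (h2 : deriv (deriv U₁) 0 = -1)
    (hneg : ∀ x ∈ Set.Ioo 0 (2 * Real.pi), U₁ x < 0) :
    ∃ V : ℝ → ℝ, (∀ x, AnalyticAt ℝ V x) ∧
      Function.Periodic V (2 * Real.pi) ∧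
      (∀ x, 0 < V x) ∧ V 0 = 1 ∧
      ∀ x, U₁ x = (Real.cos x - 1) * V x := by
  classical
  set c : ℝ → ℝ := fun x => Real.cos x - 1 with hc
  -- derivatives of c
  have hcA : ∀ x, AnalyticAt ℝ c x := fun x => (analyticAt_real_cos x).sub analyticAt_const
  have hc0 : c 0 = 0 := by simp [hc]
  have hcd : deriv c = fun x => -Real.sin x := by
    funext x
    have : HasDerivAt c (-Real.sin x) x := (Real.hasDerivAt_cos x).sub_const 1
    exact this.deriv
  have hc1 : deriv c 0 = 0 := by simp [hcd]
  have hc2 : deriv (deriv c) 0 = -1 := by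
    rw [hcd]
    have : HasDerivAt (fun x => -Real.sin x) (-Real.cos 0) 0 := (Real.hasDerivAt_sin 0).neg
    simp only [Real.cos_zero] at this; exact this.deriv
  obtain ⟨h₁, hh₁A, hh₁0, hh₁ev⟩ := factor_sq U₁ (hA 0) h0 h1 h2
  obtain ⟨h₂, hh₂A, hh₂0, hh₂ev⟩ := factor_sq c (hcA 0) hc0 hc1 hc2
  have hh₂ne : h₂ 0 ≠ 0 := by rw [hh₂0]; norm_num
  -- define V
  set V : ℝ → ℝ := fun x => if Real.cos x = 1 then 1 else U₁ x / (Real.cos x - 1) with hV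
  have twopi_pos : (0:ℝ) < 2 * Real.pi := by positivity
  -- periodicity of V
  have hVper : Function.Periodic V (2 * Real.pi) := by
    intro x
    simp only [hV, Real.cos_add_two_pi, hper x]
  -- U₁ vanishes exactly on cos = 1 points; reduction mod 2π
  have hU_neg : ∀ x : ℝ, Real.cos x ≠ 1 → U₁ x < 0 := by
    intro x hx
    set n : ℤ := ⌊x / (2 * Real.pi)⌋ with hn
    set y : ℝ := x - n * (2 * Real.pi) with hy
    have hy0 : 0 ≤ y := Int.sub_floor_div_mul_nonneg x twopi_pos
    have hy2 : y < 2 * Real.pi := Int.sub_floor_div_mul_lt x twopi_pos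
    have hyx : U₁ y = U₁ x := hper.sub_int_mul_eq n
    have hyne : y ≠ 0 := by
      intro h
      apply hx
      rw [Real.cos_eq_one_iff]
      exact ⟨n, by linarith [sub_eq_zero.mp (hy ▸ h)]⟩
    have := hneg y ⟨lt_of_le_of_ne hy0 (Ne.symm hyne), hy2⟩
    linarith [hyx ▸ this]
  have hU_zero : ∀ x : ℝ, Real.cos x = 1 → U₁ x = 0 := by
    intro x hx
    obtain ⟨n, hn⟩ := (Real.cos_eq_one_iff x).mp hx
    have : U₁ ((n:ℝ) * (2 * Real.pi)) = U₁ 0 := hper.int_mul_eq n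
    rw [hn] at this
    rw [this, h0]
  -- V near 0 equals h₁ / h₂
  have hVnear : V =ᶠ[𝓝 (0:ℝ)] fun x => h₁ x / h₂ x := by
    have hh₂cont : ∀ᶠ x in 𝓝 (0:ℝ), h₂ x ≠ 0 :=
      hh₂A.continuousAt.eventually_ne hh₂ne
    filter_upwards [hh₁ev, hh₂ev, hh₂cont] with x e1 e2 e3
    by_cases hx : x = 0
    · subst hx
      simp only [hV, Real.cos_zero, if_pos rfl]
      rw [hh₁0, hh₂0]
      norm_num
    · have hx2 : x ^ 2 ≠ 0 := pow_ne_zero 2 hx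
      have hcx : Real.cos x - 1 ≠ 0 := by
        rw [show Real.cos x - 1 = c x from rfl, e2]
        exact mul_ne_zero hx2 e3
      have hcosx : Real.cos x ≠ 1 := fun h => hcx (by rw [h]; ring)
      simp only [hV, if_neg hcosx]
      rw [e1, show Real.cos x - 1 = c x from rfl, e2,
        mul_div_mul_left _ _ hx2]
  have hV0A : AnalyticAt ℝ V 0 := (hh₁A.div hh₂A hh₂ne).congr hVnear.symm
  -- analyticity everywhere
  have hVA : ∀ x, AnalyticAt ℝ V x := by
    intro x
    by_cases hx : Real.cos x = 1
    · -- x = n * 2π; translate analyticity from 0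
      obtain ⟨n, hn⟩ := (Real.cos_eq_one_iff x).mp hx
      have hgA : AnalyticAt ℝ (fun y : ℝ => y - x) x :=
        analyticAt_id.sub analyticAt_const
      have hcomp : AnalyticAt ℝ (V ∘ fun y : ℝ => y - x) x :=
        AnalyticAt.comp (g := V) (f := fun y : ℝ => y - x) (by simpa using hV0A) hgA
      refine hcomp.congr (Filter.Eventually.of_forall fun y => ?_)
      show V (y - x) = V y
      rw [← hn]
      exact hVper.sub_int_mul_eq n
    · -- cos x ≠ 1 : V equals the quotient near x
      have hcx : Real.cos x - 1 ≠ 0 := sub_ne_zero.mpr hx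
      have hcont : ∀ᶠ y in 𝓝 x, Real.cos y ≠ 1 :=
        (Real.continuous_cos.continuousAt).eventually_ne hx
      have hq : AnalyticAt ℝ (fun y => U₁ y / (Real.cos y - 1)) x :=
        (hA x).div ((analyticAt_real_cos x).sub analyticAt_const) hcx
      refine hq.congr ?_
      filter_upwards [hcont] with y hy
      simp only [hV, if_neg hy]
  -- positivity
  have hVpos : ∀ x, 0 < V x := by
    intro x
    by_cases hx : Real.cos x = 1
    · simp [hV, hx]
    · have hU := hU_neg x hx
      have hcx : Real.cos x - 1 < 0 :=
        sub_neg.mpr (lt_of_le_of_ne (Real.cos_le_one x) hx)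
      simp only [hV, if_neg hx]
      exact div_pos_of_neg_of_neg hU hcx
  refine ⟨V, hVA, hVper, hVpos, ?_, ?_⟩
  · simp [hV]
  · intro x
    by_cases hx : Real.cos x = 1
    · simp [hV, hx, hU_zero x hx]
    · have hcx : Real.cos x - 1 ≠ 0 := sub_ne_zero.mpr hx
      simp only [hV, if_neg hx]
      field_simp
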